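/- arXiv:1204.2435 — 3 statements merged into one kernel-verified Lean document; each statement's English description precedes it below -/
import Mathlib

section
/- For every z > 0, writing α = f(z) (so 0 < α < 1), one has f(z⁻¹) = 1 − α and (1−q)·h(1−α) − q(1−α)·log(z⁻¹) + q c Σ_{t∈I_c} γ_t log A_t(z⁻¹) = (1−q)·h(α) − qα·log z + q c Σ_{t∈I_c} γ_t log A_t(z). Consequently the spectral shape G(α) = (1−q)h(α) − qα log f⁻¹(α) + q c Σ_{t∈I_c} γ_t log A_t(f⁻¹(α)) satisfies G(1−α) = G(α) for all α ∈ (0,1). -/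
open Finset Filter Real Topology

/-- The local weight enumerating polynomial `A_t(z) = 1 + ∑_{u=r_t}^{s_t} a_{t,u} z^u`,
encoded with a full coefficient function `a` satisfying `a t 0 = 1`, `a t u = 0` for
`0 < u < r t` and for `u > s t`. -/
noncomputable def Afun {ι : Type*} (s : ι → ℕ) (a : ι → ℕ → ℝ) (t : ι) (z : ℝ) : ℝ :=
  ∑ u ∈ Finset.range (s t + 1), a t u * z ^ u

/-- The function `f(z) = c ⬝ ∑_{t ∈ I_c} γ_t z A_t′(z) / A_t(z)`. -/
noncomputable def ff {ι : Type*} [Fintype ι] (s : ι → ℕ) (a : ι → ℕ → ℝ)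
    (γ : ι → ℝ) (c : ℝ) (z : ℝ) : ℝ :=
  c * ∑ t, γ t * (z * deriv (Afun s a t) z) / Afun s a t z

/-- The binary entropy function (in nats). -/
noncomputable def hEnt (x : ℝ) : ℝ := -x * Real.log x - (1 - x) * Real.log (1 - x)


noncomputable def Nf {ι : Type*} (s : ι → ℕ) (a : ι → ℕ → ℝ) (t : ι) (z : ℝ) : ℝ :=
  ∑ u ∈ Finset.range (s t + 1), (u : ℝ) * a t u * z ^ u

lemma hasDerivAt_sum_pow (b : ℕ → ℝ) (n : ℕ) (z : ℝ) :
    HasDerivAt (fun z : ℝ => ∑ u ∈ Finset.range (n+1), b u * z ^ u)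
      (∑ u ∈ Finset.range (n+1), b u * (u * z ^ (u-1))) z := by
  apply HasDerivAt.fun_sum
  intro u hu
  exact (hasDerivAt_pow u z).const_mul (b u)

lemma z_mul_deriv {ι : Type*} (s : ι → ℕ) (a : ι → ℕ → ℝ) (t : ι) (z : ℝ) :
    z * deriv (Afun s a t) z = Nf s a t z := by
  have h : HasDerivAt (Afun s a t) (∑ u ∈ Finset.range (s t+1), a t u * (u * z ^ (u-1))) z :=
    hasDerivAt_sum_pow (a t) (s t) z
  rw [h.deriv, Nf, Finset.mul_sum]
  apply Finset.sum_congr rfl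
  intro u _
  cases u with
  | zero => simp
  | succ v => simp only [Nat.add_sub_cancel, pow_succ]; push_cast; ring

lemma ff_eq {ι : Type*} [Fintype ι] (s : ι → ℕ) (a : ι → ℕ → ℝ)
    (γ : ι → ℝ) (c : ℝ) (z : ℝ) :
    ff s a γ c z = c * ∑ t, γ t * Nf s a t z / Afun s a t z := by
  unfold ff
  congr 1
  apply Finset.sum_congr rfl
  intro t _
  rw [z_mul_deriv]

lemma reflect_A (n : ℕ) (b : ℕ → ℝ) (hsym : ∀ u ≤ n, b u = b (n - u)) {z : ℝ} (hz : z ≠ 0) :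
    (∑ u ∈ Finset.range (n+1), b u * (z⁻¹) ^ u)
      = (∑ u ∈ Finset.range (n+1), b u * z ^ u) / z ^ n := by
  rw [eq_div_iff (pow_ne_zero n hz), Finset.sum_mul]
  have h1 : ∀ u ∈ Finset.range (n+1), b u * z⁻¹ ^ u * z ^ n = b (n - u) * z ^ (n - u) := by
    intro u hu
    have hun : u ≤ n := Nat.lt_succ_iff.mp (Finset.mem_range.mp hu)
    rw [← hsym u hun, mul_assoc]
    congr 1
    field_simp
    rw [one_div, inv_pow, pow_sub₀ z hz hun]; ring
  rw [Finset.sum_congr rfl h1]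
  have h2 := Finset.sum_range_reflect (fun u => b u * z ^ u) (n+1)
  simpa using h2

lemma reflect_N (n : ℕ) (b : ℕ → ℝ) (hsym : ∀ u ≤ n, b u = b (n - u)) {z : ℝ} (hz : z ≠ 0) :
    (∑ u ∈ Finset.range (n+1), (u:ℝ) * b u * (z⁻¹) ^ u)
      = ((n:ℝ) * (∑ u ∈ Finset.range (n+1), b u * z ^ u)
          - ∑ u ∈ Finset.range (n+1), (u:ℝ) * b u * z ^ u) / z ^ n := by
  rw [eq_div_iff (pow_ne_zero n hz), Finset.sum_mul]
  have h1 : ∀ u ∈ Finset.range (n+1), (u:ℝ) * b u * z⁻¹ ^ u * z ^ n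
      = ((n - (n - u) : ℕ):ℝ) * b (n - u) * z ^ (n - u) := by
    intro u hu
    have hun : u ≤ n := Nat.lt_succ_iff.mp (Finset.mem_range.mp hu)
    have hz2 : z⁻¹ ^ u * z ^ n = z ^ (n - u) := by
      field_simp
      rw [one_div, inv_pow, pow_sub₀ z hz hun]; ring
    rw [← hsym u hun, Nat.sub_sub_self hun, ← hz2]
    ring
  rw [Finset.sum_congr rfl h1]
  have h2 := Finset.sum_range_reflect (fun j => ((n - j : ℕ):ℝ) * b j * z ^ j) (n+1)
  simp only [Nat.add_sub_cancel] at h2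
  rw [h2, Finset.mul_sum, ← Finset.sum_sub_distrib]
  apply Finset.sum_congr rfl
  intro u hu
  have hun : u ≤ n := Nat.lt_succ_iff.mp (Finset.mem_range.mp hu)
  rw [Nat.cast_sub hun]
  ring

lemma mono_aux (n : ℕ) (b : ℕ → ℝ) (hb0 : b 0 = 1) (hbn : b n = 1) (hn : 1 ≤ n)
    (hnnb : ∀ u, 0 ≤ b u) {x y : ℝ} (hx : 0 < x) (hxy : x < y) :
    (∑ u ∈ Finset.range (n+1), (u:ℝ) * b u * x ^ u) * (∑ u ∈ Finset.range (n+1), b u * y ^ u)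
    < (∑ u ∈ Finset.range (n+1), (u:ℝ) * b u * y ^ u)
        * (∑ u ∈ Finset.range (n+1), b u * x ^ u) := by
  have hy : 0 < y := hx.trans hxy
  set R := Finset.range (n+1) with hR
  set g : ℕ → ℕ → ℝ := fun u v => (u:ℝ) * b u * b v * (y^u * x^v - x^u * y^v) with hg
  have expand :
      (∑ u ∈ R, (u:ℝ) * b u * y ^ u) * (∑ v ∈ R, b v * x ^ v)
        - (∑ u ∈ R, (u:ℝ) * b u * x ^ u) * (∑ v ∈ R, b v * y ^ v)
      = ∑ u ∈ R, ∑ v ∈ R, g u v := by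
    rw [Finset.sum_mul_sum, Finset.sum_mul_sum, ← Finset.sum_sub_distrib]
    apply Finset.sum_congr rfl; intro u _
    rw [← Finset.sum_sub_distrib]
    apply Finset.sum_congr rfl; intro v _
    simp only [hg]; ring
  have hswap : ∑ u ∈ R, ∑ v ∈ R, g u v = ∑ u ∈ R, ∑ v ∈ R, g v u := Finset.sum_comm
  have h2 : ∑ u ∈ R, ∑ v ∈ R, (g u v + g v u) = 2 * ∑ u ∈ R, ∑ v ∈ R, g u v := by
    simp only [Finset.sum_add_distrib]
    rw [← hswap]; ring
  -- key pointwise inequality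
  have keyhalf : ∀ u v : ℕ, v ≤ u → 0 ≤ ((u:ℝ) - v) * (y^u * x^v - x^u * y^v) := by
    intro u v huv
    apply mul_nonneg
    · have : (v:ℝ) ≤ u := by exact_mod_cast huv
      linarith
    · have h1 : x ^ (u - v) ≤ y ^ (u - v) := pow_le_pow_left₀ hx.le hxy.le _
      have hxu : x ^ u = x ^ (u - v) * x ^ v := by
        rw [← pow_add]; congr 1; omega
      have hyu : y ^ u = y ^ (u - v) * y ^ v := by
        rw [← pow_add]; congr 1; omega
      have hpos : 0 ≤ x ^ v * y ^ v := by positivity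
      have hle : x ^ u * y ^ v ≤ y ^ u * x ^ v := by
        calc x ^ u * y ^ v = x ^ (u - v) * (x ^ v * y ^ v) := by rw [hxu]; ring
          _ ≤ y ^ (u - v) * (x ^ v * y ^ v) := mul_le_mul_of_nonneg_right h1 hpos
          _ = y ^ u * x ^ v := by rw [hyu]; ring
      linarith
  have keypt : ∀ u v : ℕ, 0 ≤ g u v + g v u := by
    intro u v
    have hring : g u v + g v u = b u * b v * (((u:ℝ) - v) * (y^u * x^v - x^u * y^v)) := by
      simp only [hg]; ring
    rw [hring]
    rcases le_total v u with h | h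
    · exact mul_nonneg (mul_nonneg (hnnb u) (hnnb v)) (keyhalf u v h)
    · have := keyhalf v u h
      have heq : ((u:ℝ) - v) * (y^u * x^v - x^u * y^v)
          = ((v:ℝ) - u) * (y^v * x^u - x^v * y^u) := by ring
      rw [heq]
      exact mul_nonneg (mul_nonneg (hnnb u) (hnnb v)) this
  have hmemn : n ∈ R := by simp [hR]
  have hmem0 : 0 ∈ R := by simp [hR]
  have hpt : 0 < g n 0 + g 0 n := by
    have hring : g n 0 + g 0 n = b n * b 0 * (((n:ℝ) - 0) * (y^n * x^0 - x^n * y^0)) := by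
      simp only [hg]; push_cast; ring
    rw [hring, hbn, hb0]
    have h1 : x ^ n < y ^ n := by
      apply pow_lt_pow_left₀ hxy hx.le
      omega
    have hn' : (0:ℝ) < n := by exact_mod_cast hn
    simp only [pow_zero, mul_one]
    nlinarith
  have hpos : 0 < ∑ u ∈ R, ∑ v ∈ R, (g u v + g v u) := by
    apply Finset.sum_pos'
    · intro u _
      exact Finset.sum_nonneg fun v _ => keypt u v
    · refine ⟨n, hmemn, ?_⟩
      apply Finset.sum_pos'
      · intro v _; exact keypt n v
      · exact ⟨0, hmem0, hpt⟩
  rw [h2] at hpos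
  have : 0 < ∑ u ∈ R, ∑ v ∈ R, g u v := by linarith
  rw [← expand] at this
  linarith

/-- under the normalization `c ⬝ ∑_t γ_t s_t = 1` and symmetric coefficients
(so `M = 1`): for every `z > 0`, writing `α = f(z)` one has `0 < α < 1`, `f(z⁻¹) = 1 − α`, and
`(1−q)h(1−α) − q(1−α)log z⁻¹ + qc ∑_t γ_t log A_t(z⁻¹)
  = (1−q)h(α) − qα log z + qc ∑_t γ_t log A_t(z)`.
Consequently the spectral shape `G(α) = (1−q)h(α) − qα log f⁻¹(α) + qc ∑_t γ_t log A_t(f⁻¹(α))`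
satisfies `G(1−α) = G(α)` for all `α ∈ (0,1)`. -/
theorem stmt_8 {ι : Type*} [Fintype ι] [Nonempty ι]
    (q : ℕ) (hq : 2 ≤ q)
    (r s : ι → ℕ) (h2r : ∀ t, 2 ≤ r t) (hrs : ∀ t, r t ≤ s t)
    (a : ι → ℕ → ℝ)
    (ha0 : ∀ t, a t 0 = 1)
    (hmid : ∀ t u, 0 < u → u < r t → a t u = 0)
    (hhigh : ∀ t u, s t < u → a t u = 0)
    (hnn : ∀ t u, 0 ≤ a t u)
    (har : ∀ t, 0 < a t (r t))
    (hsym : ∀ t, ∀ u ≤ s t, a t u = a t (s t - u))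
    (γ : ι → ℝ) (hγ : ∀ t, 0 < γ t) (c : ℝ) (hc : 0 < c)
    (hnorm : c * ∑ t, γ t * (s t : ℝ) = 1) :
    (∀ z : ℝ, 0 < z →
      (0 < ff s a γ c z ∧ ff s a γ c z < 1) ∧
      ff s a γ c z⁻¹ = 1 - ff s a γ c z ∧
      ((1 - (q : ℝ)) * hEnt (1 - ff s a γ c z)
          - (q : ℝ) * (1 - ff s a γ c z) * Real.log z⁻¹
          + (q : ℝ) * c * ∑ t, γ t * Real.log (Afun s a t z⁻¹)
        = (1 - (q : ℝ)) * hEnt (ff s a γ c z)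
          - (q : ℝ) * ff s a γ c z * Real.log z
          + (q : ℝ) * c * ∑ t, γ t * Real.log (Afun s a t z))) ∧
    (∀ finv : ℝ → ℝ,
      (∀ α ∈ Set.Ioo (0 : ℝ) 1, 0 < finv α ∧ ff s a γ c (finv α) = α) →
      ∀ α ∈ Set.Ioo (0 : ℝ) 1,
        (1 - (q : ℝ)) * hEnt (1 - α) - (q : ℝ) * (1 - α) * Real.log (finv (1 - α))
            + (q : ℝ) * c * ∑ t, γ t * Real.log (Afun s a t (finv (1 - α)))
          = (1 - (q : ℝ)) * hEnt α - (q : ℝ) * α * Real.log (finv α)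
            + (q : ℝ) * c * ∑ t, γ t * Real.log (Afun s a t (finv α))) := by
  have hs1 : ∀ t, 1 ≤ s t := fun t => le_trans (by norm_num) (le_trans (h2r t) (hrs t))
  have has : ∀ t, a t (s t) = 1 := by
    intro t
    have h := hsym t 0 (Nat.zero_le _)
    rw [ha0] at h
    simpa using h.symm
  have hApos : ∀ t, ∀ z : ℝ, 0 < z → 0 < Afun s a t z := by
    intro t z hz
    unfold Afun
    apply Finset.sum_pos'
    · intro u _; exact mul_nonneg (hnn t u) (pow_pos hz u).le
    · exact ⟨0, by simp, by simp [ha0 t]⟩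
  have hNpos : ∀ t, ∀ z : ℝ, 0 < z → 0 < Nf s a t z := by
    intro t z hz
    unfold Nf
    apply Finset.sum_pos'
    · intro u _
      exact mul_nonneg (mul_nonneg (Nat.cast_nonneg u) (hnn t u)) (pow_pos hz u).le
    · refine ⟨s t, by simp, ?_⟩
      rw [has t]
      have h1 : (0:ℝ) < (s t : ℝ) := by exact_mod_cast hs1 t
      have h2 : (0:ℝ) < z ^ s t := pow_pos hz _
      nlinarith
  have hNlt : ∀ t, ∀ z : ℝ, 0 < z → Nf s a t z < (s t : ℝ) * Afun s a t z := by
    intro t z hz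
    unfold Nf Afun
    rw [Finset.mul_sum]
    apply Finset.sum_lt_sum
    · intro u hu
      have hun : (u:ℝ) ≤ (s t : ℝ) := by
        exact_mod_cast Nat.lt_succ_iff.mp (Finset.mem_range.mp hu)
      have hnng : 0 ≤ a t u * z ^ u := mul_nonneg (hnn t u) (pow_pos hz u).le
      calc (u:ℝ) * a t u * z ^ u = (u:ℝ) * (a t u * z ^ u) := by ring
        _ ≤ (s t : ℝ) * (a t u * z ^ u) := mul_le_mul_of_nonneg_right hun hnng
    · refine ⟨0, by simp, ?_⟩
      simp only [Nat.cast_zero, zero_mul, pow_zero, mul_one, ha0 t]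
      have : (0:ℝ) < (s t : ℝ) := by exact_mod_cast hs1 t
      linarith
  have hbpos : ∀ z : ℝ, 0 < z → 0 < ff s a γ c z := by
    intro z hz
    rw [ff_eq]
    apply mul_pos hc
    apply Finset.sum_pos
    · intro t _
      rw [mul_div_assoc]
      exact mul_pos (hγ t) (div_pos (hNpos t z hz) (hApos t z hz))
    · exact Finset.univ_nonempty
  have hblt : ∀ z : ℝ, 0 < z → ff s a γ c z < 1 := by
    intro z hz
    rw [ff_eq]
    have hsum : ∑ t, γ t * Nf s a t z / Afun s a t z < ∑ t, γ t * (s t : ℝ) := by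
      apply Finset.sum_lt_sum_of_nonempty Finset.univ_nonempty
      intro t _
      rw [div_lt_iff₀ (hApos t z hz)]
      have := mul_lt_mul_of_pos_left (hNlt t z hz) (hγ t)
      calc γ t * Nf s a t z < γ t * ((s t : ℝ) * Afun s a t z) := this
        _ = γ t * (s t : ℝ) * Afun s a t z := by ring
    calc c * ∑ t, γ t * Nf s a t z / Afun s a t z
        < c * ∑ t, γ t * (s t : ℝ) := by exact mul_lt_mul_of_pos_left hsum hc
      _ = 1 := hnorm
  have hterm : ∀ t, ∀ z : ℝ, 0 < z →
      Nf s a t z⁻¹ / Afun s a t z⁻¹ = (s t : ℝ) - Nf s a t z / Afun s a t z := by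
    intro t z hz
    have hA := hApos t z hz
    have hzn : z ^ (s t) ≠ 0 := pow_ne_zero _ (ne_of_gt hz)
    unfold Nf Afun
    rw [reflect_A (s t) (a t) (hsym t) (ne_of_gt hz),
        reflect_N (s t) (a t) (hsym t) (ne_of_gt hz)]
    have hAne : (∑ u ∈ Finset.range (s t + 1), a t u * z ^ u) ≠ 0 := by
      unfold Afun at hA; exact ne_of_gt hA
    rw [div_div_div_comm]
    rw [div_self hzn, div_one]
    rw [sub_div, mul_div_assoc, div_self hAne, mul_one]
  have hrefl : ∀ z : ℝ, 0 < z → ff s a γ c z⁻¹ = 1 - ff s a γ c z := by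
    intro z hz
    rw [ff_eq, ff_eq]
    have : ∀ t ∈ Finset.univ (α := ι), γ t * Nf s a t z⁻¹ / Afun s a t z⁻¹
        = γ t * (s t : ℝ) - γ t * Nf s a t z / Afun s a t z := by
      intro t _
      rw [mul_div_assoc, hterm t z hz, mul_div_assoc]
      ring
    rw [Finset.sum_congr rfl this, Finset.sum_sub_distrib, mul_sub, hnorm]
  have hlog : ∀ t, ∀ z : ℝ, 0 < z →
      Real.log (Afun s a t z⁻¹) = Real.log (Afun s a t z) - (s t : ℝ) * Real.log z := by
    intro t z hz
    have := reflect_A (s t) (a t) (hsym t) (ne_of_gt hz)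
    unfold Afun
    rw [this, Real.log_div (by unfold Afun at *; exact ne_of_gt (hApos t z hz))
        (pow_ne_zero _ (ne_of_gt hz)), Real.log_pow]
  have key : ∀ z : ℝ, 0 < z →
      (0 < ff s a γ c z ∧ ff s a γ c z < 1) ∧
      ff s a γ c z⁻¹ = 1 - ff s a γ c z ∧
      ((1 - (q : ℝ)) * hEnt (1 - ff s a γ c z)
          - (q : ℝ) * (1 - ff s a γ c z) * Real.log z⁻¹
          + (q : ℝ) * c * ∑ t, γ t * Real.log (Afun s a t z⁻¹)
        = (1 - (q : ℝ)) * hEnt (ff s a γ c z)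
          - (q : ℝ) * ff s a γ c z * Real.log z
          + (q : ℝ) * c * ∑ t, γ t * Real.log (Afun s a t z)) := by
    intro z hz
    refine ⟨⟨hbpos z hz, hblt z hz⟩, hrefl z hz, ?_⟩
    have hEntEq : hEnt (1 - ff s a γ c z) = hEnt (ff s a γ c z) := by
      unfold hEnt
      rw [sub_sub_cancel]
      ring
    have hsumlog : ∑ t, γ t * Real.log (Afun s a t z⁻¹)
        = (∑ t, γ t * Real.log (Afun s a t z)) - (∑ t, γ t * (s t : ℝ)) * Real.log z := by
      have : ∀ t ∈ Finset.univ (α := ι), γ t * Real.log (Afun s a t z⁻¹)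
          = γ t * Real.log (Afun s a t z) - γ t * (s t : ℝ) * Real.log z := by
        intro t _
        rw [hlog t z hz]
        ring
      rw [Finset.sum_congr rfl this, Finset.sum_sub_distrib, Finset.sum_mul]
    rw [hEntEq, Real.log_inv, hsumlog]
    linear_combination (-(q : ℝ) * Real.log z) * hnorm
  refine ⟨key, ?_⟩
  have hmono : ∀ x y : ℝ, 0 < x → x < y → ff s a γ c x < ff s a γ c y := by
    intro x y hx hxy
    have hy : 0 < y := hx.trans hxy
    rw [ff_eq, ff_eq]
    apply mul_lt_mul_of_pos_left ?_ hc
    apply Finset.sum_lt_sum_of_nonempty Finset.univ_nonempty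
    intro t _
    rw [mul_div_assoc, mul_div_assoc]
    apply mul_lt_mul_of_pos_left ?_ (hγ t)
    rw [div_lt_div_iff₀ (hApos t x hx) (hApos t y hy)]
    exact mono_aux (s t) (a t) (ha0 t) (has t) (hs1 t) (hnn t) hx hxy
  have hinj : ∀ x y : ℝ, 0 < x → 0 < y → ff s a γ c x = ff s a γ c y → x = y := by
    intro x y hx hy hxy
    rcases lt_trichotomy x y with h | h | h
    · exact absurd hxy (ne_of_lt (hmono x y hx h))
    · exact h
    · exact absurd hxy.symm (ne_of_lt (hmono y x hy h))
  intro finv hfinv α hα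
  have hα1 : (1 - α) ∈ Set.Ioo (0:ℝ) 1 := ⟨by linarith [hα.2], by linarith [hα.1]⟩
  obtain ⟨hz, hfz⟩ := hfinv (1 - α) hα1
  obtain ⟨hw, hfw⟩ := hfinv α hα
  obtain ⟨-, hrefl', hid⟩ := key (finv (1 - α)) hz
  have hinvα : ff s a γ c (finv (1 - α))⁻¹ = α := by
    rw [hrefl', hfz]; ring
  have hweq : finv α = (finv (1 - α))⁻¹ :=
    hinj _ _ hw (inv_pos.mpr hz) (by rw [hfw, hinvα])
  rw [hfz] at hid
  have h11 : 1 - (1 - α) = α := by ring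
  rw [h11] at hid
  rw [hweq]
  exact hid.symm
end

section
/- Suppose ε₀ > 0 and x₀, y₀, β : (0, ε₀) → (0,∞) are functions such that, for every α ∈ (0, ε₀), x₀(α) Σ_{t∈I_v} δ_t ∂_xB_t(x₀(α),y₀(α))/B_t(x₀(α),y₀(α)) = α and y₀(α) Σ_{t∈I_v} δ_t ∂_yB_t(x₀(α),y₀(α))/B_t(x₀(α),y₀(α)) = β(α). Then β(α) → 0 as α → 0⁺. -/
open Finset Filter Real Topology

/-- The VN input–output weight enumerating polynomial
`B_t(x,y) = 1 + ∑_{u=1}^{k_t} ∑_{v=p_t}^{q_t} b_{t,u,v} x^u y^v`. -/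
noncomputable def BIcc {ι : Type*} (k p q : ι → ℕ) (b : ι → ℕ → ℕ → ℝ) (t : ι)
    (x y : ℝ) : ℝ :=
  1 + ∑ u ∈ Finset.Icc 1 (k t), ∑ v ∈ Finset.Icc (p t) (q t), b t u v * x ^ u * y ^ v

/-- `∫λ = ∑_t λ_t/q_t`. -/
noncomputable def intden {ι : Type*} [Fintype ι] (w : ι → ℝ) (n : ι → ℕ) : ℝ :=
  ∑ t, w t / n t

/-- `δ_t = λ_t/(q_t ∫λ)`. -/
noncomputable def nodefrac {ι : Type*} [Fintype ι] (w : ι → ℝ) (n : ι → ℕ) (t : ι) : ℝ :=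
  w t / (n t * intden w n)

lemma hasDerivAt_BIcc_x {ι : Type*} (k p q : ι → ℕ) (b : ι → ℕ → ℕ → ℝ) (t : ι)
    (y x : ℝ) :
    HasDerivAt (fun x => BIcc k p q b t x y)
      (∑ u ∈ Finset.Icc 1 (k t), ∑ v ∈ Finset.Icc (p t) (q t),
        b t u v * (u * x ^ (u - 1)) * y ^ v) x := by
  unfold BIcc
  exact (HasDerivAt.fun_sum fun u _ => HasDerivAt.fun_sum fun v _ =>
    ((hasDerivAt_pow u x).const_mul (b t u v)).mul_const (y ^ v)).const_add 1

lemma hasDerivAt_BIcc_y {ι : Type*} (k p q : ι → ℕ) (b : ι → ℕ → ℕ → ℝ) (t : ι)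
    (x y : ℝ) :
    HasDerivAt (fun y => BIcc k p q b t x y)
      (∑ u ∈ Finset.Icc 1 (k t), ∑ v ∈ Finset.Icc (p t) (q t),
        b t u v * x ^ u * (v * y ^ (v - 1))) y := by
  unfold BIcc
  exact (HasDerivAt.fun_sum fun u _ => HasDerivAt.fun_sum fun v _ =>
    (hasDerivAt_pow v y).const_mul (b t u v * x ^ u)).const_add 1

/-- if positive functions `x₀, y₀, β` on `(0,ε₀)` satisfy
`x₀ ∑_t δ_t ∂_xB_t/B_t = α` and `y₀ ∑_t δ_t ∂_yB_t/B_t = β`, then `β(α) → 0` as `α → 0⁺`. -/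
theorem stmt_15 {ι : Type*} [Fintype ι] [Nonempty ι]
    (k p q : ι → ℕ) (hk : ∀ t, 1 ≤ k t) (hp : ∀ t, 2 ≤ p t) (hpq : ∀ t, p t ≤ q t)
    (b : ι → ℕ → ℕ → ℝ) (hbnn : ∀ t u v, 0 ≤ b t u v)
    (hbne : ∀ t, ∃ u ∈ Finset.Icc 1 (k t), ∃ v ∈ Finset.Icc (p t) (q t), b t u v ≠ 0)
    (lam : ι → ℝ) (hlam : ∀ t, 0 < lam t) (hlam1 : ∑ t, lam t = 1)
    (ε₀ : ℝ) (hε₀ : 0 < ε₀)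
    (x₀ y₀ β : ℝ → ℝ)
    (hpos : ∀ α ∈ Set.Ioo 0 ε₀, 0 < x₀ α ∧ 0 < y₀ α ∧ 0 < β α)
    (hE2 : ∀ α ∈ Set.Ioo 0 ε₀,
      x₀ α * ∑ t, nodefrac lam q t *
        deriv (fun x => BIcc k p q b t x (y₀ α)) (x₀ α) / BIcc k p q b t (x₀ α) (y₀ α) = α)
    (hE3 : ∀ α ∈ Set.Ioo 0 ε₀,
      y₀ α * ∑ t, nodefrac lam q t *
        deriv (fun y => BIcc k p q b t (x₀ α) y) (y₀ α) / BIcc k p q b t (x₀ α) (y₀ α)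
          = β α) :
    Filter.Tendsto β (nhdsWithin 0 (Set.Ioi 0)) (𝓝 0) := by
  classical
  set Q : ℝ := ((Finset.univ.sup q : ℕ) : ℝ) with hQdef
  have hQt : ∀ t, (q t : ℝ) ≤ Q := fun t =>
    Nat.cast_le.mpr (Finset.le_sup (Finset.mem_univ t))
  have hQ0 : 0 ≤ Q := Nat.cast_nonneg _
  -- positivity of δ_t
  have hint : 0 < intden lam q := by
    refine Finset.sum_pos (fun t _ => ?_) Finset.univ_nonempty
    have h2 : 0 < q t := by have := (hp t).trans (hpq t); omega
    exact div_pos (hlam t) (by exact_mod_cast h2)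
  have hδ : ∀ t, 0 ≤ nodefrac lam q t := by
    intro t
    have h2 : 0 < q t := by have := (hp t).trans (hpq t); omega
    have hq : (0:ℝ) < q t := by exact_mod_cast h2
    exact le_of_lt (div_pos (hlam t) (mul_pos hq hint))
  -- the key bound
  have key : ∀ α ∈ Set.Ioo 0 ε₀, β α ≤ Q * α := by
    intro α hα
    obtain ⟨hx, hy, hb⟩ := hpos α hα
    set X := x₀ α with hXdef
    set Y := y₀ α with hYdef
    have hB : ∀ t, (1:ℝ) ≤ BIcc k p q b t X Y := by
      intro t
      unfold BIcc
      have : (0:ℝ) ≤ ∑ u ∈ Finset.Icc 1 (k t), ∑ v ∈ Finset.Icc (p t) (q t),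
          b t u v * X ^ u * Y ^ v := by
        refine Finset.sum_nonneg fun u _ => Finset.sum_nonneg fun v _ => ?_
        exact mul_nonneg (mul_nonneg (hbnn t u v) (pow_nonneg hx.le u))
          (pow_nonneg hy.le v)
      linarith
    have hXD : ∀ t, X * deriv (fun x => BIcc k p q b t x Y) X
        = ∑ u ∈ Finset.Icc 1 (k t), ∑ v ∈ Finset.Icc (p t) (q t),
            b t u v * u * X ^ u * Y ^ v := by
      intro t
      rw [(hasDerivAt_BIcc_x k p q b t Y X).deriv, Finset.mul_sum]
      refine Finset.sum_congr rfl fun u hu => ?_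
      rw [Finset.mul_sum]
      refine Finset.sum_congr rfl fun v _ => ?_
      have hu1 : 1 ≤ u := (Finset.mem_Icc.mp hu).1
      have hxu : X * X ^ (u - 1) = X ^ u := by
        rw [← pow_succ' X (u - 1)]; congr 1; omega
      calc X * (b t u v * (↑u * X ^ (u - 1)) * Y ^ v)
          = b t u v * ↑u * (X * X ^ (u - 1)) * Y ^ v := by ring
        _ = b t u v * ↑u * X ^ u * Y ^ v := by rw [hxu]
    have hYD : ∀ t, Y * deriv (fun y => BIcc k p q b t X y) Y
        = ∑ u ∈ Finset.Icc 1 (k t), ∑ v ∈ Finset.Icc (p t) (q t),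
            b t u v * v * X ^ u * Y ^ v := by
      intro t
      rw [(hasDerivAt_BIcc_y k p q b t X Y).deriv, Finset.mul_sum]
      refine Finset.sum_congr rfl fun u _ => ?_
      rw [Finset.mul_sum]
      refine Finset.sum_congr rfl fun v hv => ?_
      have hv1 : 1 ≤ v := le_trans (le_trans one_le_two (hp t))
        (Finset.mem_Icc.mp hv).1
      have hyv : Y * Y ^ (v - 1) = Y ^ v := by
        rw [← pow_succ' Y (v - 1)]; congr 1; omega
      calc Y * (b t u v * X ^ u * (↑v * Y ^ (v - 1)))
          = b t u v * ↑v * X ^ u * (Y * Y ^ (v - 1)) := by ring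
        _ = b t u v * ↑v * X ^ u * Y ^ v := by rw [hyv]
    -- termwise sum inequality
    have hSS : ∀ t,
        (∑ u ∈ Finset.Icc 1 (k t), ∑ v ∈ Finset.Icc (p t) (q t),
          b t u v * v * X ^ u * Y ^ v)
        ≤ Q * ∑ u ∈ Finset.Icc 1 (k t), ∑ v ∈ Finset.Icc (p t) (q t),
          b t u v * u * X ^ u * Y ^ v := by
      intro t
      rw [Finset.mul_sum]
      refine Finset.sum_le_sum fun u hu => ?_
      rw [Finset.mul_sum]
      refine Finset.sum_le_sum fun v hv => ?_
      have hu1 : (1:ℝ) ≤ u := by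
        exact_mod_cast (Finset.mem_Icc.mp hu).1
      have hvq : (v:ℝ) ≤ q t := by
        exact_mod_cast (Finset.mem_Icc.mp hv).2
      have hmon : (0:ℝ) ≤ b t u v * X ^ u * Y ^ v := by
        have := hbnn t u v; positivity
      have hvQu : (v:ℝ) ≤ Q * u := by
        calc (v:ℝ) ≤ Q := hvq.trans (hQt t)
          _ = Q * 1 := (mul_one Q).symm
          _ ≤ Q * u := by nlinarith
      calc b t u v * ↑v * X ^ u * Y ^ v
          = ↑v * (b t u v * X ^ u * Y ^ v) := by ring
        _ ≤ (Q * ↑u) * (b t u v * X ^ u * Y ^ v) :=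
            mul_le_mul_of_nonneg_right hvQu hmon
        _ = Q * (b t u v * ↑u * X ^ u * Y ^ v) := by ring
    -- sum inequality
    calc β α = Y * ∑ t, nodefrac lam q t *
          deriv (fun y => BIcc k p q b t X y) Y / BIcc k p q b t X Y :=
        (hE3 α hα).symm
      _ ≤ Q * (X * ∑ t, nodefrac lam q t *
          deriv (fun x => BIcc k p q b t x Y) X / BIcc k p q b t X Y) := ?_
      _ = Q * α := by rw [hE2 α hα]
    rw [Finset.mul_sum, Finset.mul_sum, Finset.mul_sum]
    refine Finset.sum_le_sum fun t _ => ?_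
    have hBpos : (0:ℝ) < BIcc k p q b t X Y := lt_of_lt_of_le one_pos (hB t)
    have e1 : Y * (nodefrac lam q t * deriv (fun y => BIcc k p q b t X y) Y
        / BIcc k p q b t X Y)
        = nodefrac lam q t * (Y * deriv (fun y => BIcc k p q b t X y) Y)
          / BIcc k p q b t X Y := by ring
    have e2 : Q * (X * (nodefrac lam q t * deriv (fun x => BIcc k p q b t x Y) X
        / BIcc k p q b t X Y))
        = Q * (nodefrac lam q t * (X * deriv (fun x => BIcc k p q b t x Y) X))
          / BIcc k p q b t X Y := by ring
    rw [e1, e2, hYD t, hXD t]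
    rw [div_le_div_iff₀ hBpos hBpos]
    refine mul_le_mul_of_nonneg_right ?_ hBpos.le
    calc nodefrac lam q t * ∑ u ∈ Finset.Icc 1 (k t), ∑ v ∈ Finset.Icc (p t) (q t),
          b t u v * v * X ^ u * Y ^ v
        ≤ nodefrac lam q t * (Q * ∑ u ∈ Finset.Icc 1 (k t),
            ∑ v ∈ Finset.Icc (p t) (q t), b t u v * u * X ^ u * Y ^ v) :=
          mul_le_mul_of_nonneg_left (hSS t) (hδ t)
      _ = Q * (nodefrac lam q t * ∑ u ∈ Finset.Icc 1 (k t),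
            ∑ v ∈ Finset.Icc (p t) (q t), b t u v * u * X ^ u * Y ^ v) := by ring
  -- squeeze
  have hmem : Set.Ioo (0:ℝ) ε₀ ∈ 𝓝[>] (0:ℝ) :=
    Ioo_mem_nhdsGT_of_mem ⟨le_refl 0, hε₀⟩
  refine squeeze_zero' (Filter.eventually_of_mem hmem fun α hα => (hpos α hα).2.2.le)
    (Filter.eventually_of_mem hmem fun α hα => key α hα) ?_
  have : Filter.Tendsto (fun α : ℝ => Q * α) (𝓝 0) (𝓝 (Q * 0)) :=
    (continuous_const.mul continuous_id).tendsto 0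
  simpa using this.mono_left nhdsWithin_le_nhds
end

section
/- Suppose ε₀ > 0 and z₀, β : (0, ε₀) → (0,∞) are functions such that, for every α ∈ (0, ε₀), z₀(α) (∫ρ/∫λ) Σ_{t∈I_c} γ_t A_t′(z₀(α))/A_t(z₀(α)) = β(α), and assume β(α) → 0 as α → 0⁺. Then z₀(α) → 0 as α → 0⁺, and z₀(α)^r · C / (β(α) · ∫λ) → 1 as α → 0⁺. -/
open Finset Filter Real Topology

/-- The CN weight enumerating polynomial `A_t(z) = 1 + ∑_{u=r_t}^{s_t} a_{t,u} z^u`. -/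
noncomputable def AIcc {ι : Type*} (r s : ι → ℕ) (a : ι → ℕ → ℝ) (t : ι) (z : ℝ) : ℝ :=
  1 + ∑ u ∈ Finset.Icc (r t) (s t), a t u * z ^ u

/-- `C = r ∑_{t : r_t = r} ρ_t a_{t,r} / s_t`, where `r = min_t r_t`. -/
noncomputable def Cdef {ι : Type*} [Fintype ι] (rc sc : ι → ℕ) (a : ι → ℕ → ℝ)
    (ρ : ι → ℝ) (rmin : ℕ) : ℝ :=
  rmin * ∑ t ∈ Finset.univ.filter (fun t => rc t = rmin), ρ t * a t rmin / sc t

/-- `P_t(z) = ∑_u u a_{t,u} z^{u-rmin}` so that `z A_t'(z) = z^{rmin} P_t(z)`. -/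
noncomputable def Pfun {ι : Type*} (rc sc : ι → ℕ) (a : ι → ℕ → ℝ) (rmin : ℕ) (t : ι) (z : ℝ) : ℝ :=
  ∑ u ∈ Finset.Icc (rc t) (sc t), (u : ℝ) * a t u * z ^ (u - rmin)

noncomputable def Hfun {ι : Type*} [Fintype ι] (rc sc : ι → ℕ) (a : ι → ℕ → ℝ)
    (ρ : ι → ℝ) (rmin : ℕ) (z : ℝ) : ℝ :=
  ∑ t, ρ t / sc t * (Pfun rc sc a rmin t z / AIcc rc sc a t z)

lemma derivAIcc {ι : Type*} (rc sc : ι → ℕ) (a : ι → ℕ → ℝ) (t : ι) (z : ℝ) :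
    deriv (AIcc rc sc a t) z
      = ∑ u ∈ Finset.Icc (rc t) (sc t), a t u * (u * z ^ (u - 1)) := by
  have h : HasDerivAt (AIcc rc sc a t)
      (∑ u ∈ Finset.Icc (rc t) (sc t), a t u * (u * z ^ (u - 1))) z := by
    unfold AIcc
    have hs := HasDerivAt.fun_sum (fun u (hu : u ∈ Finset.Icc (rc t) (sc t)) =>
      ((hasDerivAt_pow u z).const_mul (a t u)))
    simpa using hs.const_add (1:ℝ)
  exact h.deriv

lemma AIcc_ge_one {ι : Type*} (rc sc : ι → ℕ) (a : ι → ℕ → ℝ) (hann : ∀ t u, 0 ≤ a t u)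
    (t : ι) (z : ℝ) (hz : 0 ≤ z) : 1 ≤ AIcc rc sc a t z := by
  unfold AIcc
  have : 0 ≤ ∑ u ∈ Finset.Icc (rc t) (sc t), a t u * z ^ u :=
    Finset.sum_nonneg fun u _ => mul_nonneg (hann t u) (pow_nonneg hz u)
  linarith

lemma AIcc_pos {ι : Type*} (rc sc : ι → ℕ) (a : ι → ℕ → ℝ) (hann : ∀ t u, 0 ≤ a t u)
    (t : ι) (z : ℝ) (hz : 0 ≤ z) : 0 < AIcc rc sc a t z :=
  lt_of_lt_of_le one_pos (AIcc_ge_one rc sc a hann t z hz)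

lemma AIcc_gt_one {ι : Type*} (rc sc : ι → ℕ) (a : ι → ℕ → ℝ) (hann : ∀ t u, 0 ≤ a t u)
    (hrs : ∀ t, rc t ≤ sc t) (har : ∀ t, 0 < a t (rc t))
    (t : ι) (z : ℝ) (hz : 0 < z) : 1 < AIcc rc sc a t z := by
  unfold AIcc
  have hmem : rc t ∈ Finset.Icc (rc t) (sc t) := Finset.mem_Icc.mpr ⟨le_refl _, hrs t⟩
  have hpos : 0 < a t (rc t) * z ^ (rc t) := mul_pos (har t) (pow_pos hz _)
  have : 0 < ∑ u ∈ Finset.Icc (rc t) (sc t), a t u * z ^ u :=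
    Finset.sum_pos' (fun u _ => mul_nonneg (hann t u) (pow_nonneg hz.le u)) ⟨_, hmem, hpos⟩
  linarith

lemma AIcc_mono {ι : Type*} (rc sc : ι → ℕ) (a : ι → ℕ → ℝ) (hann : ∀ t u, 0 ≤ a t u)
    (t : ι) {y z : ℝ} (hy : 0 ≤ y) (hyz : y ≤ z) :
    AIcc rc sc a t y ≤ AIcc rc sc a t z := by
  unfold AIcc
  gcongr with u hu
  exact hann t u

lemma AIcc_zero {ι : Type*} (rc sc : ι → ℕ) (a : ι → ℕ → ℝ) (h2r : ∀ t, 2 ≤ rc t) (t : ι) :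
    AIcc rc sc a t 0 = 1 := by
  unfold AIcc
  rw [Finset.sum_eq_zero, add_zero]
  intro u hu
  have hu2 : 2 ≤ u := le_trans (h2r t) (Finset.mem_Icc.mp hu).1
  rw [zero_pow (by omega), mul_zero]

lemma Pfun_zero {ι : Type*} (rc sc : ι → ℕ) (a : ι → ℕ → ℝ) (rmin : ℕ)
    (hrs : ∀ t, rc t ≤ sc t) (hrle : ∀ t, rmin ≤ rc t) (t : ι) :
    Pfun rc sc a rmin t 0 = if rc t = rmin then (rmin : ℝ) * a t rmin else 0 := by
  unfold Pfun
  by_cases h : rc t = rmin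
  · rw [if_pos h]
    rw [Finset.sum_eq_single rmin]
    · rw [Nat.sub_self, pow_zero, mul_one]
    · intro u hu hne
      have h1 := (Finset.mem_Icc.mp hu).1
      rw [h] at h1
      rw [zero_pow (by omega), mul_zero]
    · intro hmem
      exact absurd (Finset.mem_Icc.mpr ⟨h.le, h ▸ hrs t⟩) hmem
  · rw [if_neg h]
    apply Finset.sum_eq_zero
    intro u hu
    have h1 := (Finset.mem_Icc.mp hu).1
    have h2 := hrle t
    rw [zero_pow (by omega), mul_zero]

lemma Pfun_nonneg {ι : Type*} (rc sc : ι → ℕ) (a : ι → ℕ → ℝ) (hann : ∀ t u, 0 ≤ a t u)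
    (rmin : ℕ) (t : ι) (z : ℝ) (hz : 0 ≤ z) : 0 ≤ Pfun rc sc a rmin t z :=
  Finset.sum_nonneg fun u _ => mul_nonneg (mul_nonneg (Nat.cast_nonneg u) (hann t u))
    (pow_nonneg hz _)

lemma zpow_mul_Pfun {ι : Type*} (rc sc : ι → ℕ) (a : ι → ℕ → ℝ) (rmin : ℕ)
    (hrle : ∀ t, rmin ≤ rc t) (t : ι) (z : ℝ) :
    z ^ rmin * Pfun rc sc a rmin t z
      = ∑ u ∈ Finset.Icc (rc t) (sc t), (u : ℝ) * a t u * z ^ u := by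
  unfold Pfun
  rw [Finset.mul_sum]
  apply Finset.sum_congr rfl
  intro u hu
  have h1 : rmin ≤ u := le_trans (hrle t) (Finset.mem_Icc.mp hu).1
  rw [← mul_assoc, mul_comm (z ^ rmin), mul_assoc, ← pow_add, Nat.add_sub_cancel' h1]

lemma z_mul_derivAIcc {ι : Type*} (rc sc : ι → ℕ) (a : ι → ℕ → ℝ) (rmin : ℕ)
    (h2r : ∀ t, 2 ≤ rc t) (hrle : ∀ t, rmin ≤ rc t) (t : ι) (z : ℝ) :
    z * deriv (AIcc rc sc a t) z = z ^ rmin * Pfun rc sc a rmin t z := by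
  rw [derivAIcc, zpow_mul_Pfun rc sc a rmin hrle, Finset.mul_sum]
  apply Finset.sum_congr rfl
  intro u hu
  have h1 : 1 ≤ u := le_trans (by omega) (le_trans (h2r t) (Finset.mem_Icc.mp hu).1)
  have : z * z ^ (u - 1) = z ^ u := by
    rw [← pow_succ', Nat.sub_add_cancel h1]
  ring_nf
  rw [this]

section Main
variable {ι : Type*} [Fintype ι] [Nonempty ι]

lemma Hfun_zero (rc sc : ι → ℕ) (a : ι → ℕ → ℝ) (ρ : ι → ℝ) (rmin : ℕ)
    (h2r : ∀ t, 2 ≤ rc t) (hrs : ∀ t, rc t ≤ sc t) (hrle : ∀ t, rmin ≤ rc t) :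
    Hfun rc sc a ρ rmin 0 = Cdef rc sc a ρ rmin := by
  unfold Hfun Cdef
  rw [Finset.mul_sum, Finset.sum_filter]
  apply Finset.sum_congr rfl
  intro t _
  rw [Pfun_zero rc sc a rmin hrs hrle, AIcc_zero rc sc a h2r]
  split_ifs with h
  · ring
  · simp

lemma Hfun_pos (rc sc : ι → ℕ) (a : ι → ℕ → ℝ) (ρ : ι → ℝ) (rmin : ℕ)
    (h2r : ∀ t, 2 ≤ rc t) (hrs : ∀ t, rc t ≤ sc t) (hann : ∀ t u, 0 ≤ a t u)
    (har : ∀ t, 0 < a t (rc t)) (hρ : ∀ t, 0 < ρ t)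
    (hrle : ∀ t, rmin ≤ rc t) (hrex : ∃ t, rc t = rmin)
    (z : ℝ) (hz : 0 ≤ z) : 0 < Hfun rc sc a ρ rmin z := by
  obtain ⟨t0, ht0⟩ := hrex
  have hscpos : ∀ t : ι, (0:ℝ) < sc t := by
    intro t
    have := (h2r t).trans (hrs t)
    positivity
  apply Finset.sum_pos'
  · intro t _
    have hA := AIcc_pos rc sc a hann t z hz
    have hP := Pfun_nonneg rc sc a hann rmin t z hz
    exact mul_nonneg (div_nonneg (hρ t).le (hscpos t).le) (div_nonneg hP hA.le)
  · refine ⟨t0, Finset.mem_univ _, ?_⟩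
    have hA := AIcc_pos rc sc a hann t0 z hz
    have hP : 0 < Pfun rc sc a rmin t0 z := by
      unfold Pfun
      apply Finset.sum_pos'
      · intro u _
        exact mul_nonneg (mul_nonneg (Nat.cast_nonneg u) (hann t0 u)) (pow_nonneg hz _)
      · refine ⟨rc t0, Finset.mem_Icc.mpr ⟨le_refl _, hrs t0⟩, ?_⟩
        rw [ht0, Nat.sub_self, pow_zero, mul_one]
        have := h2r t0
        have := har t0
        rw [ht0] at this
        have hr0 : (0:ℝ) < rmin := by
          have h2 : 2 ≤ rmin := ht0 ▸ h2r t0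
          exact_mod_cast by omega
        exact mul_pos hr0 this
    have := hρ t0
    have := hscpos t0
    positivity

lemma Hfun_tendsto (rc sc : ι → ℕ) (a : ι → ℕ → ℝ) (ρ : ι → ℝ) (rmin : ℕ)
    (h2r : ∀ t, 2 ≤ rc t) :
    Filter.Tendsto (Hfun rc sc a ρ rmin) (𝓝 0) (𝓝 (Hfun rc sc a ρ rmin 0)) := by
  unfold Hfun
  apply tendsto_finset_sum
  intro t _
  apply Filter.Tendsto.const_mul
  have hPcont : Continuous (Pfun rc sc a rmin t) := by
    unfold Pfun
    exact continuous_finset_sum _ fun u _ => continuous_const.mul (continuous_pow _)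
  have hAcont : Continuous (AIcc rc sc a t) := by
    unfold AIcc
    exact continuous_const.add
      (continuous_finset_sum _ fun u _ => continuous_const.mul (continuous_pow _))
  have hA0 : AIcc rc sc a t 0 ≠ 0 := by
    rw [AIcc_zero rc sc a h2r]; norm_num
  exact (hPcont.tendsto 0).div (hAcont.tendsto 0) hA0

lemma key_identity (rc sc : ι → ℕ) (a : ι → ℕ → ℝ) (ρ : ι → ℝ) (rmin : ℕ) (intL : ℝ)
    (h2r : ∀ t, 2 ≤ rc t) (hrs : ∀ t, rc t ≤ sc t) (hann : ∀ t u, 0 ≤ a t u)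
    (hρ : ∀ t, 0 < ρ t) (hrle : ∀ t, rmin ≤ rc t) (hintL : intL ≠ 0)
    (z : ℝ) (hz : 0 ≤ z) :
    z * ((intden ρ sc / intL) *
        ∑ t, nodefrac ρ sc t * deriv (AIcc rc sc a t) z / AIcc rc sc a t z)
      = z ^ rmin * Hfun rc sc a ρ rmin z / intL := by
  have hscpos : ∀ t : ι, (0:ℝ) < sc t := by
    intro t
    have := (h2r t).trans (hrs t)
    positivity
  have hintden : 0 < intden ρ sc :=
    Finset.sum_pos (fun t _ => div_pos (hρ t) (hscpos t)) Finset.univ_nonempty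
  unfold Hfun
  have hR : z ^ rmin * (∑ t, ρ t / sc t * (Pfun rc sc a rmin t z / AIcc rc sc a t z)) / intL
      = ∑ t, z ^ rmin * (ρ t / sc t * (Pfun rc sc a rmin t z / AIcc rc sc a t z)) / intL := by
    rw [Finset.mul_sum, Finset.sum_div]
  rw [hR, Finset.mul_sum, Finset.mul_sum]
  apply Finset.sum_congr rfl
  intro t _
  have hA := AIcc_pos rc sc a hann t z hz
  have hzD := z_mul_derivAIcc rc sc a rmin h2r hrle t z
  have h1 : nodefrac ρ sc t * intden ρ sc = ρ t / sc t := by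
    unfold nodefrac
    field_simp
  rw [← h1]
  have e1 : z * (intden ρ sc / intL * (nodefrac ρ sc t * deriv (AIcc rc sc a t) z
        / AIcc rc sc a t z))
      = (z * deriv (AIcc rc sc a t) z) * (intden ρ sc * nodefrac ρ sc t)
        / (intL * AIcc rc sc a t z) := by ring
  have e2 : z ^ rmin * (nodefrac ρ sc t * intden ρ sc
        * (Pfun rc sc a rmin t z / AIcc rc sc a t z)) / intL
      = (z ^ rmin * Pfun rc sc a rmin t z) * (intden ρ sc * nodefrac ρ sc t)
        / (intL * AIcc rc sc a t z) := by ring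
  rw [e1, e2, hzD]

end Main

section MainThm
variable {ι : Type*} [Fintype ι] [Nonempty ι]

theorem stmt_16'
    (rc sc : ι → ℕ) (h2r : ∀ t, 2 ≤ rc t) (hrs : ∀ t, rc t ≤ sc t)
    (a : ι → ℕ → ℝ) (hann : ∀ t u, 0 ≤ a t u) (har : ∀ t, 0 < a t (rc t))
    (ρ : ι → ℝ) (hρ : ∀ t, 0 < ρ t) (hρ1 : ∑ t, ρ t = 1)
    (intL : ℝ) (hintL : 0 < intL)
    (rmin : ℕ) (hrle : ∀ t, rmin ≤ rc t) (hrex : ∃ t, rc t = rmin)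
    (ε₀ : ℝ) (hε₀ : 0 < ε₀)
    (z₀ β : ℝ → ℝ)
    (hpos : ∀ α ∈ Set.Ioo 0 ε₀, 0 < z₀ α ∧ 0 < β α)
    (hE1 : ∀ α ∈ Set.Ioo 0 ε₀,
      z₀ α * ((intden ρ sc / intL) *
        ∑ t, nodefrac ρ sc t * deriv (AIcc rc sc a t) (z₀ α) / AIcc rc sc a t (z₀ α)) = β α)
    (hβ0 : Filter.Tendsto β (nhdsWithin 0 (Set.Ioi 0)) (𝓝 0)) :
    Filter.Tendsto z₀ (nhdsWithin 0 (Set.Ioi 0)) (𝓝 0) ∧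
    Filter.Tendsto (fun α => z₀ α ^ rmin * Cdef rc sc a ρ rmin / (β α * intL))
      (nhdsWithin 0 (Set.Ioi 0)) (𝓝 1) := by
  obtain ⟨t0, ht0⟩ := hrex
  have hintL' : intL ≠ 0 := hintL.ne'
  have hscpos : ∀ t : ι, (0:ℝ) < sc t := by
    intro t
    have := (h2r t).trans (hrs t)
    positivity
  have hβeq : ∀ α ∈ Set.Ioo 0 ε₀,
      β α * intL = z₀ α ^ rmin * Hfun rc sc a ρ rmin (z₀ α) := by
    intro α hα
    have h := hE1 α hα
    rw [key_identity rc sc a ρ rmin intL h2r hrs hann hρ hrle hintL' _ (hpos α hα).1.le] at h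
    rw [← h, div_mul_cancel₀ _ hintL']
  have hIoo : ∀ᶠ α in 𝓝[>](0:ℝ), α ∈ Set.Ioo 0 ε₀ := by
    filter_upwards [eventually_mem_nhdsWithin,
      eventually_nhdsWithin_of_eventually_nhds (eventually_lt_nhds hε₀)] with α h1 h2
    exact ⟨h1, h2⟩
  have part1 : Filter.Tendsto z₀ (𝓝[>](0:ℝ)) (𝓝 0) := by
    rw [Metric.tendsto_nhds]
    intro ε hε
    have hAε : 1 < AIcc rc sc a t0 ε := AIcc_gt_one rc sc a hann hrs har t0 ε hε
    have hAεpos : (0:ℝ) < AIcc rc sc a t0 ε := lt_trans one_pos hAε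
    set c : ℝ := ρ t0 / sc t0 * ((rmin : ℝ) * (1 - 1 / AIcc rc sc a t0 ε)) with hc
    have hrpos : (0:ℝ) < rmin := by
      have h2 : 2 ≤ rmin := ht0 ▸ h2r t0
      exact_mod_cast by omega
    have hcpos : 0 < c := by
      have h1 : 1 / AIcc rc sc a t0 ε < 1 := by
        rw [div_lt_one hAεpos]; exact hAε
      have := hρ t0
      have := hscpos t0
      rw [hc]
      have h2 : 0 < 1 - 1 / AIcc rc sc a t0 ε := by linarith
      positivity
    have hsmall : ∀ᶠ α in 𝓝[>](0:ℝ), β α * intL < c := by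
      have ht : Filter.Tendsto (fun α => β α * intL) (𝓝[>](0:ℝ)) (𝓝 (0 * intL)) :=
        hβ0.mul_const intL
      rw [zero_mul] at ht
      exact ht.eventually (eventually_lt_nhds hcpos)
    filter_upwards [hIoo, hsmall] with α hα hlt
    rw [Real.dist_eq, sub_zero, abs_of_pos (hpos α hα).1]
    by_contra hge
    push_neg at hge
    have hzpos : 0 < z₀ α := (hpos α hα).1
    set z := z₀ α with hz
    have hA := AIcc_pos rc sc a hann t0 z hzpos.le
    have hAmono : AIcc rc sc a t0 ε ≤ AIcc rc sc a t0 z :=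
      AIcc_mono rc sc a hann t0 hε.le hge
    have hb1 : (rmin:ℝ) * (AIcc rc sc a t0 z - 1) ≤ z ^ rmin * Pfun rc sc a rmin t0 z := by
      rw [zpow_mul_Pfun rc sc a rmin hrle t0 z]
      have hAeq : AIcc rc sc a t0 z - 1 = ∑ u ∈ Finset.Icc (rc t0) (sc t0), a t0 u * z ^ u := by
        unfold AIcc; ring
      rw [hAeq, Finset.mul_sum]
      apply Finset.sum_le_sum
      intro u hu
      have hur : (rmin:ℝ) ≤ u := by
        exact_mod_cast le_trans (hrle t0) (Finset.mem_Icc.mp hu).1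
      have hnn : 0 ≤ a t0 u * z ^ u := mul_nonneg (hann t0 u) (pow_nonneg hzpos.le u)
      nlinarith
    have hterm : c ≤ z ^ rmin * (ρ t0 / sc t0 * (Pfun rc sc a rmin t0 z / AIcc rc sc a t0 z)) := by
      have s1 : 1 - 1 / AIcc rc sc a t0 ε ≤ 1 - 1 / AIcc rc sc a t0 z := by
        have := one_div_le_one_div_of_le hAεpos hAmono
        linarith
      have s2 : (rmin:ℝ) * (1 - 1 / AIcc rc sc a t0 z)
          = (rmin:ℝ) * (AIcc rc sc a t0 z - 1) / AIcc rc sc a t0 z := by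
        field_simp
      have s3 : (rmin:ℝ) * (AIcc rc sc a t0 z - 1) / AIcc rc sc a t0 z
          ≤ z ^ rmin * Pfun rc sc a rmin t0 z / AIcc rc sc a t0 z :=
        (div_le_div_iff_of_pos_right hA).mpr hb1
      have s4 : (rmin:ℝ) * (1 - 1 / AIcc rc sc a t0 ε)
          ≤ z ^ rmin * Pfun rc sc a rmin t0 z / AIcc rc sc a t0 z := by
        calc (rmin:ℝ) * (1 - 1 / AIcc rc sc a t0 ε)
            ≤ (rmin:ℝ) * (1 - 1 / AIcc rc sc a t0 z) :=
              mul_le_mul_of_nonneg_left s1 hrpos.le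
          _ = (rmin:ℝ) * (AIcc rc sc a t0 z - 1) / AIcc rc sc a t0 z := s2
          _ ≤ _ := s3
      have hρs : 0 ≤ ρ t0 / sc t0 := (div_pos (hρ t0) (hscpos t0)).le
      have := mul_le_mul_of_nonneg_left s4 hρs
      rw [hc]
      calc ρ t0 / ↑(sc t0) * ((rmin : ℝ) * (1 - 1 / AIcc rc sc a t0 ε))
          ≤ ρ t0 / ↑(sc t0) * (z ^ rmin * Pfun rc sc a rmin t0 z / AIcc rc sc a t0 z) := this
        _ = z ^ rmin * (ρ t0 / ↑(sc t0) * (Pfun rc sc a rmin t0 z / AIcc rc sc a t0 z)) := by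
            ring
    have hsum : c ≤ z ^ rmin * Hfun rc sc a ρ rmin z := by
      unfold Hfun
      rw [Finset.mul_sum]
      refine le_trans hterm (Finset.single_le_sum (f := fun t =>
        z ^ rmin * (ρ t / sc t * (Pfun rc sc a rmin t z / AIcc rc sc a t z))) ?_
        (Finset.mem_univ t0))
      intro t _
      have hAt := AIcc_pos rc sc a hann t z hzpos.le
      have hPt := Pfun_nonneg rc sc a hann rmin t z hzpos.le
      have := (hρ t).le
      have := (hscpos t).le
      positivity
    rw [hβeq α hα] at hlt
    exact absurd hlt (not_lt.mpr hsum)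
  have hCpos : 0 < Cdef rc sc a ρ rmin := by
    unfold Cdef
    have hrpos : (0:ℝ) < rmin := by
      have h2 : 2 ≤ rmin := ht0 ▸ h2r t0
      exact_mod_cast by omega
    refine mul_pos hrpos (Finset.sum_pos ?_ ?_)
    · intro t ht
      have h := (Finset.mem_filter.mp ht).2
      have ha : 0 < a t rmin := h ▸ har t
      exact div_pos (mul_pos (hρ t) ha) (hscpos t)
    · exact ⟨t0, Finset.mem_filter.mpr ⟨Finset.mem_univ _, ht0⟩⟩
  refine ⟨part1, ?_⟩
  have hH0 : Hfun rc sc a ρ rmin 0 = Cdef rc sc a ρ rmin := Hfun_zero rc sc a ρ rmin h2r hrs hrle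
  have hHt : Filter.Tendsto (fun α => Hfun rc sc a ρ rmin (z₀ α)) (𝓝[>](0:ℝ))
      (𝓝 (Cdef rc sc a ρ rmin)) := by
    have := (Hfun_tendsto rc sc a ρ rmin h2r).comp part1
    rwa [hH0] at this
  have hlim : Filter.Tendsto (fun α => Cdef rc sc a ρ rmin / Hfun rc sc a ρ rmin (z₀ α))
      (𝓝[>](0:ℝ)) (𝓝 1) := by
    have := Filter.Tendsto.div (tendsto_const_nhds (x := Cdef rc sc a ρ rmin)) hHt hCpos.ne'
    rwa [div_self hCpos.ne'] at this
  refine hlim.congr' ?_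
  filter_upwards [hIoo] with α hα
  have hzp := (hpos α hα).1
  have hHp := Hfun_pos rc sc a ρ rmin h2r hrs hann har hρ hrle ⟨t0, ht0⟩ (z₀ α) hzp.le
  rw [hβeq α hα]
  exact (mul_div_mul_left _ _ (pow_ne_zero rmin hzp.ne')).symm

end MainThm

/-- if positive functions `z₀, β` on `(0,ε₀)` satisfy
`z₀ (∫ρ/∫λ) ∑_t γ_t A_t′(z₀)/A_t(z₀) = β` and `β(α) → 0` as `α → 0⁺`, then `z₀(α) → 0`
and `z₀(α)^r C/(β(α)∫λ) → 1` as `α → 0⁺`. -/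
theorem stmt_16 {ι : Type*} [Fintype ι] [Nonempty ι]
    (rc sc : ι → ℕ) (h2r : ∀ t, 2 ≤ rc t) (hrs : ∀ t, rc t ≤ sc t)
    (a : ι → ℕ → ℝ) (hann : ∀ t u, 0 ≤ a t u) (har : ∀ t, 0 < a t (rc t))
    (ρ : ι → ℝ) (hρ : ∀ t, 0 < ρ t) (hρ1 : ∑ t, ρ t = 1)
    (intL : ℝ) (hintL : 0 < intL)
    (rmin : ℕ) (hrle : ∀ t, rmin ≤ rc t) (hrex : ∃ t, rc t = rmin)
    (ε₀ : ℝ) (hε₀ : 0 < ε₀)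
    (z₀ β : ℝ → ℝ)
    (hpos : ∀ α ∈ Set.Ioo 0 ε₀, 0 < z₀ α ∧ 0 < β α)
    (hE1 : ∀ α ∈ Set.Ioo 0 ε₀,
      z₀ α * ((intden ρ sc / intL) *
        ∑ t, nodefrac ρ sc t * deriv (AIcc rc sc a t) (z₀ α) / AIcc rc sc a t (z₀ α)) = β α)
    (hβ0 : Filter.Tendsto β (nhdsWithin 0 (Set.Ioi 0)) (𝓝 0)) :
    Filter.Tendsto z₀ (nhdsWithin 0 (Set.Ioi 0)) (𝓝 0) ∧
    Filter.Tendsto (fun α => z₀ α ^ rmin * Cdef rc sc a ρ rmin / (β α * intL))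
      (nhdsWithin 0 (Set.Ioi 0)) (𝓝 1) := by
  exact stmt_16' rc sc h2r hrs a hann har ρ hρ hρ1 intL hintL rmin hrle hrex ε₀ hε₀ z₀ β hpos
    hE1 hβ0
end
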